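/- arXiv:2102.08841 — 3 statements merged into one kernel-verified Lean document; each statement's English description precedes it below -/
import Mathlib

section
/- Let A be the m×m symmetric tridiagonal matrix with corner diagonal entries a, interior diagonal entries c, and off-diagonal entries b, where c² > 4b² and b ≠ 0. With λ₁ = (-c + √(c² - 4b²))/(2b) and λ₂ = (-c - √(c² - 4b²))/(2b), det(A) = ((-1)^m b^{m-1} / √(c²-4b²)) · (a²(λ₁^{m-1} - λ₂^{m-1}) + 2ab(λ₁^{m-2} - λ₂^{m-2}) + b²(λ₁^{m-3} - λ₂^{m-3})). -/
open Real


def triFun (d : ℕ → ℝ) (b : ℝ) (i j : ℕ) : ℝ :=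
  if i = j then d i else if i + 1 = j ∨ j + 1 = i then b else 0

def tri (d : ℕ → ℝ) (b : ℝ) (n : ℕ) : Matrix (Fin n) (Fin n) ℝ :=
  Matrix.of fun i j => triFun d b i j

lemma triFun_shift (d : ℕ → ℝ) (b : ℝ) (i j : ℕ) :
    triFun d b (i + 1) (j + 1) = triFun (fun k => d (k + 1)) b i j := by
  unfold triFun
  by_cases h : i = j
  · subst h; simp
  · rw [if_neg (by omega), if_neg h]
    by_cases h2 : i + 1 = j ∨ j + 1 = i
    · rw [if_pos (by omega), if_pos h2]
    · rw [if_neg (by omega), if_neg h2]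

lemma succAbove_one_val {n : ℕ} (j : Fin (n + 1)) (hj : (j : ℕ) ≠ 0) :
    ((Fin.succ 0 : Fin (n + 2)).succAbove j : ℕ) = (j : ℕ) + 1 := by
  rw [Fin.succAbove, if_neg]
  · simp
  · simp only [Fin.lt_def, Fin.coe_castSucc, Fin.val_succ, Fin.val_zero]
    omega

lemma succAbove_one_zero {n : ℕ} :
    ((Fin.succ 0 : Fin (n + 2)).succAbove (0 : Fin (n + 1)) : ℕ) = 0 := by
  rw [Fin.succAbove, if_pos]
  · simp
  · simp only [Fin.lt_def, Fin.coe_castSucc, Fin.val_succ, Fin.val_zero]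
    omega

lemma tri_det_rec (d : ℕ → ℝ) (b : ℝ) (n : ℕ) :
    (tri d b (n + 2)).det = d 0 * (tri (fun i => d (i + 1)) b (n + 1)).det
      - b ^ 2 * (tri (fun i => d (i + 2)) b n).det := by
  have h00 : tri d b (n + 2) 0 0 = d 0 := by simp [tri, triFun]
  have h01 : tri d b (n + 2) 0 (Fin.succ 0) = b := by
    simp only [tri, Matrix.of_apply, Fin.val_succ, Fin.val_zero]
    unfold triFun
    rw [if_neg (by omega), if_pos (by omega)]
  have h0j : ∀ j : Fin n, tri d b (n + 2) 0 j.succ.succ = 0 := by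
    intro j
    simp only [tri, Matrix.of_apply, Fin.val_succ, Fin.val_zero]
    unfold triFun
    rw [if_neg (by omega), if_neg (by omega)]
  have hm0 : (tri d b (n + 2)).submatrix Fin.succ ((0 : Fin (n + 2)).succAbove)
      = tri (fun i => d (i + 1)) b (n + 1) := by
    ext i j
    simp only [tri, Matrix.submatrix_apply, Matrix.of_apply, Fin.zero_succAbove, Fin.val_succ]
    exact triFun_shift d b i j
  have hMdet : ((tri d b (n + 2)).submatrix Fin.succ
      ((Fin.succ 0 : Fin (n + 2)).succAbove)).det
      = b * (tri (fun i => d (i + 2)) b n).det := by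
    have hc0 : ∀ i : Fin n, (tri d b (n + 2)).submatrix Fin.succ
        ((Fin.succ 0 : Fin (n + 2)).succAbove) i.succ 0 = 0 := by
      intro i
      simp only [tri, Matrix.submatrix_apply, Matrix.of_apply, succAbove_one_zero, Fin.val_succ]
      unfold triFun
      rw [if_neg (by omega), if_neg (by omega)]
    have hM00 : (tri d b (n + 2)).submatrix Fin.succ
        ((Fin.succ 0 : Fin (n + 2)).succAbove) 0 0 = b := by
      simp only [tri, Matrix.submatrix_apply, Matrix.of_apply, Fin.val_succ, Fin.val_zero]
      rw [succAbove_one_zero]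
      unfold triFun
      rw [if_neg (by omega), if_pos (by omega)]
    have hMm : ((tri d b (n + 2)).submatrix Fin.succ
        ((Fin.succ 0 : Fin (n + 2)).succAbove)).submatrix Fin.succ Fin.succ
        = tri (fun i => d (i + 2)) b n := by
      ext i j
      simp only [tri, Matrix.submatrix_apply, Matrix.of_apply, Fin.val_succ]
      rw [succAbove_one_val j.succ (by simp), Fin.val_succ]
      have := triFun_shift d b ((i : ℕ) + 1) ((j : ℕ) + 1)
      rw [this, triFun_shift]
    rw [Matrix.det_succ_column_zero, Fin.sum_univ_succ]
    simp only [Fin.val_zero, pow_zero, one_mul, hM00, hc0, mul_zero, zero_mul,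
      Finset.sum_const_zero, add_zero]
    rw [show ((0 : Fin (n+1)).succAbove : Fin n → Fin (n + 1)) = Fin.succ from
      funext fun i => Fin.zero_succAbove i, hMm]
  rw [Matrix.det_succ_row_zero, Fin.sum_univ_succ, Fin.sum_univ_succ]
  simp only [h00, h01, h0j, hm0, hMdet, mul_zero, zero_mul, Finset.sum_const_zero, add_zero,
    Fin.val_zero, Fin.val_succ, pow_zero, one_mul, pow_one]
  ring

/-- Determinant of the symmetric tridiagonal matrix with corner diagonal entries `a`,
interior diagonal entries `c` and off-diagonal entries `b`, where `c² > 4b²`, `b ≠ 0`,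
in terms of the characteristic roots λ₁, λ₂. -/
theorem tridiagonal_det_formula (m : ℕ) (hm : 3 ≤ m) (a b c : ℝ) (hb : b ≠ 0)
    (hc : 4 * b ^ 2 < c ^ 2)
    (A : Matrix (Fin m) (Fin m) ℝ)
    (hA : ∀ i j : Fin m, A i j =
      if i = j then (if (i : ℕ) = 0 ∨ (i : ℕ) = m - 1 then a else c)
      else if (i : ℕ) + 1 = (j : ℕ) ∨ (j : ℕ) + 1 = (i : ℕ) then b else 0) :
    A.det = ((-1) ^ m * b ^ (m - 1) / Real.sqrt (c ^ 2 - 4 * b ^ 2)) *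
      (a ^ 2 * (((-c + Real.sqrt (c ^ 2 - 4 * b ^ 2)) / (2 * b)) ^ (m - 1)
              - ((-c - Real.sqrt (c ^ 2 - 4 * b ^ 2)) / (2 * b)) ^ (m - 1))
      + 2 * a * b * (((-c + Real.sqrt (c ^ 2 - 4 * b ^ 2)) / (2 * b)) ^ (m - 2)
              - ((-c - Real.sqrt (c ^ 2 - 4 * b ^ 2)) / (2 * b)) ^ (m - 2))
      + b ^ 2 * (((-c + Real.sqrt (c ^ 2 - 4 * b ^ 2)) / (2 * b)) ^ (m - 3)
              - ((-c - Real.sqrt (c ^ 2 - 4 * b ^ 2)) / (2 * b)) ^ (m - 3))) := by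
  obtain ⟨n, rfl⟩ : ∃ n, m = n + 3 := ⟨m - 3, by omega⟩
  have hpos : (0:ℝ) < c ^ 2 - 4 * b ^ 2 := by linarith
  set s := Real.sqrt (c ^ 2 - 4 * b ^ 2) with hs_def
  have hs2 : s ^ 2 = c ^ 2 - 4 * b ^ 2 := Real.sq_sqrt hpos.le
  have hs : 0 < s := Real.sqrt_pos.mpr hpos
  set x₁ : ℝ := (c + s) / 2 with hx1_def
  set x₂ : ℝ := (c - s) / 2 with hx2_def
  have hsum : x₁ + x₂ = c := by rw [hx1_def, hx2_def]; ring
  have hdiff : x₁ - x₂ = s := by rw [hx1_def, hx2_def]; ring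
  have hmul : x₁ * x₂ = b ^ 2 := by
    have h4 : x₁ * x₂ = (c ^ 2 - s ^ 2) / 4 := by rw [hx1_def, hx2_def]; ring
    rw [h4, hs2]; ring
  set T : ℕ → ℝ := fun k => (x₁ ^ k - x₂ ^ k) / s with hT_def
  have hT0 : T 0 = 0 := by simp [hT_def]
  have hT1 : T 1 = 1 := by
    simp only [hT_def, pow_one]
    rw [hdiff, div_self hs.ne']
  have hT2 : T 2 = c := by
    simp only [hT_def]
    rw [show x₁ ^ 2 - x₂ ^ 2 = (x₁ + x₂) * (x₁ - x₂) from by ring, hsum, hdiff,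
      mul_div_assoc, div_self hs.ne', mul_one]
  have hTrec : ∀ k, T (k + 2) = c * T (k + 1) - b ^ 2 * T k := by
    intro k
    simp only [hT_def]
    rw [show x₁ ^ (k + 2) - x₂ ^ (k + 2)
        = (x₁ + x₂) * (x₁ ^ (k + 1) - x₂ ^ (k + 1)) - (x₁ * x₂) * (x₁ ^ k - x₂ ^ k) from by
      ring, hsum, hmul]
    ring
  set g : ℕ → ℕ → ℝ := fun k i => if i = k then a else c with hg_def
  have hgshift : ∀ k, (fun i => g (k + 1) (i + 1)) = g k := by
    intro k; funext i; simp only [hg_def]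
    by_cases h : i = k
    · rw [if_pos (by omega), if_pos h]
    · rw [if_neg (by omega), if_neg h]
  have hS : ∀ k, (tri (g k) b (k + 1)).det = a * T (k + 1) - b ^ 2 * T k := by
    have main : ∀ k, (tri (g k) b (k + 1)).det = a * T (k + 1) - b ^ 2 * T k ∧
        (tri (g (k + 1)) b (k + 1 + 1)).det = a * T (k + 1 + 1) - b ^ 2 * T (k + 1) := by
      intro k
      induction k with
      | zero =>
        constructor
        · show (tri (g 0) b 1).det = _
          rw [Matrix.det_fin_one]
          show triFun (g 0) b 0 0 = _
          rw [hT1, hT0]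
          simp [triFun, hg_def]
        · show (tri (g 1) b 2).det = _
          rw [Matrix.det_fin_two]
          show triFun (g 1) b 0 0 * triFun (g 1) b 1 1
              - triFun (g 1) b 0 1 * triFun (g 1) b 1 0 = _
          rw [hT2, hT1]
          simp only [triFun, hg_def]
          norm_num
          ring
      | succ k ih =>
        refine ⟨ih.2, ?_⟩
        have hrec := tri_det_rec (g (k + 2)) b (k + 1)
        rw [hgshift (k + 1)] at hrec
        have h2 : (fun i => g (k + 2) (i + 2)) = g k := by
          funext i
          have h3 := congrFun (hgshift (k + 1)) (i + 1)
          rw [h3]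
          exact congrFun (hgshift k) i
        rw [h2] at hrec
        show (tri (g (k + 2)) b (k + 1 + 2)).det = _
        rw [hrec, show g (k + 2) 0 = c from by simp [hg_def], ih.1, ih.2]
        have e1 := hTrec (k + 1)
        have e2 := hTrec k
        show _ = a * T (k + 1 + 2) - b ^ 2 * T (k + 1 + 1)
        rw [e1, e2]
        ring
    exact fun k => (main k).1
  set dA : ℕ → ℝ := fun i => if i = 0 ∨ i = n + 2 then a else c with hdA_def
  have hAtri : A = tri dA b (n + 3) := by
    ext i j
    rw [hA i j]
    show _ = triFun dA b (i : ℕ) (j : ℕ)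
    simp only [triFun, hdA_def]
    by_cases h : i = j
    · subst h
      rw [if_pos rfl, if_pos rfl]
      have h5 : n + 3 - 1 = n + 2 := rfl
      rw [h5]
    · rw [if_neg h, if_neg (fun hv => h (Fin.ext hv))]
  rw [hAtri]
  have hrec := tri_det_rec dA b (n + 1)
  have e1 : (fun i => dA (i + 1)) = g (n + 1) := by
    funext i
    simp only [hdA_def, hg_def]
    by_cases h : i = n + 1
    · rw [if_pos (by omega), if_pos h]
    · rw [if_neg (by omega), if_neg h]
  have e2 : (fun i => dA (i + 2)) = g n := by
    funext i
    simp only [hdA_def, hg_def]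
    by_cases h : i = n
    · rw [if_pos (by omega), if_pos h]
    · rw [if_neg (by omega), if_neg h]
  rw [e1, e2] at hrec
  have hdA0 : dA 0 = a := by simp [hdA_def]
  show (tri dA b (n + 1 + 2)).det = _
  rw [hrec, hdA0, hS (n + 1), hS n]
  -- now pure algebra
  have hl1 : (-c + s) / (2 * b) = -x₂ / b := by
    rw [hx2_def]; field_simp; ring
  have hl2 : (-c - s) / (2 * b) = -x₁ / b := by
    rw [hx1_def]; field_simp; ring
  rw [show n + 3 - 1 = n + 2 from rfl, show n + 3 - 2 = n + 1 from rfl,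
    show n + 3 - 3 = n from rfl, hl1, hl2]
  have hp : ∀ (y : ℝ) (k : ℕ), (-y / b) ^ k = (-1) ^ k * y ^ k / b ^ k := by
    intro y k; rw [div_pow, neg_pow]
  simp only [hT_def, hp]
  rcases Nat.even_or_odd n with he | he
  · have h1 : ((-1 : ℝ)) ^ n = 1 := he.neg_one_pow
    simp only [pow_add, h1, one_mul]
    norm_num
    field_simp
    ring
  · have h1 : ((-1 : ℝ)) ^ n = -1 := he.neg_one_pow
    simp only [pow_add, h1]
    norm_num
    field_simp
    ring
end

section
/- Second-order expansion of the determinant ratio for uniform sampling at low SNR: det(A_{mm})/(γ det A) = 1 − ((1−ρ^{2m})/(1−ρ²)) γ + ( ((1−ρ^{2m})(1+ρ²))/(1−ρ²)² − 2mρ^{2m}/(1−ρ²) ) γ² + O(γ³) as γ → 0, where A = (1/γ) T' + I with T' the tridiagonal inverse-correlation matrix of an AR(1) process with parameter ρ. -/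
open Real Matrix Finset


lemma aux_mul (x : ℝ) (m : ℕ) :
    (1 - x)^2 * ∑ t ∈ Finset.range m, (2*(t:ℝ)+1)*x^t
      = 1 + x - (2*(m:ℝ)+1)*x^m + (2*(m:ℝ)-1)*x^(m+1) := by
  induction m with
  | zero => simp
  | succ n ih =>
    rw [Finset.sum_range_succ, mul_add, ih]
    push_cast
    ring

lemma aux_sum_max (x : ℝ) (m : ℕ) :
    ∑ a ∈ Finset.range m, ∑ b ∈ Finset.range m, x ^ (max a b)
      = ∑ t ∈ Finset.range m, (2*(t:ℝ)+1)*x^t := by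
  induction m with
  | zero => simp
  | succ n ih =>
    have h1 : ∀ a ∈ Finset.range n, ∑ b ∈ Finset.range (n+1), x ^ (max a b)
        = (∑ b ∈ Finset.range n, x ^ (max a b)) + x ^ n := by
      intro a ha
      rw [Finset.sum_range_succ]
      congr 2
      exact Nat.max_eq_right (le_of_lt (Finset.mem_range.mp ha))
    have h2 : ∑ b ∈ Finset.range (n+1), x ^ (max n b) = (n+1 : ℝ) * x ^ n := by
      have : ∀ b ∈ Finset.range (n+1), x ^ (max n b) = x ^ n := by
        intro b hb
        congr 1
        exact Nat.max_eq_left (Nat.lt_succ_iff.mp (Finset.mem_range.mp hb))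
      rw [Finset.sum_congr rfl this, Finset.sum_const, Finset.card_range]
      push_cast; ring
    rw [Finset.sum_range_succ (fun a => ∑ b ∈ Finset.range (n+1), x ^ (max a b)), h2,
      Finset.sum_congr rfl h1, Finset.sum_add_distrib, ih,
      Finset.sum_const, Finset.card_range, Finset.sum_range_succ]
    push_cast
    ring



noncomputable def Smat (n : ℕ) (ρ : ℝ) : Matrix (Fin n) (Fin n) ℝ :=
  Matrix.of fun i j => ρ ^ (((i:ℕ) - (j:ℕ)) + ((j:ℕ) - (i:ℕ)))

lemma fin_sum_to_range (n : ℕ) (f : ℕ → ℝ) (g : Fin n → ℝ)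
    (h : ∀ t : Fin n, g t = f ↑t) : ∑ t, g t = ∑ t ∈ range n, f t := by
  rw [← Fin.sum_univ_eq_sum_range]
  exact Finset.sum_congr rfl (fun t _ => h t)

section entries
variable (k : ℕ) (ρ : ℝ)

lemma Smat_last_last : Smat (k+1) ρ (Fin.last k) (Fin.last k) = 1 := by
  simp [Smat]

lemma Smat_sq_last : (Smat (k+1) ρ * Smat (k+1) ρ) (Fin.last k) (Fin.last k)
    = ∑ t ∈ range (k+1), (ρ^2)^t := by
  rw [Matrix.mul_apply]
  rw [fin_sum_to_range (k+1) (fun s : ℕ => ρ ^ ((k - s) + (s - k)) * ρ ^ ((s - k) + (k - s)))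
    _ (fun t => by simp [Smat, Fin.val_last])]
  have h2 : ∀ s ∈ range (k+1),
      ρ ^ ((k - s) + (s - k)) * ρ ^ ((s - k) + (k - s)) = (ρ^2)^(k - s) := by
    intro s hs
    rw [Finset.mem_range] at hs
    have hz : s - k = 0 := by omega
    rw [hz, Nat.add_zero, Nat.zero_add, ← pow_add, ← two_mul, pow_mul]
  rw [Finset.sum_congr rfl h2, ← Finset.sum_range_reflect (fun t : ℕ => (ρ^2)^t) (k+1)]
  simp only [Nat.add_sub_cancel]

lemma Smat_cube_last :
    (Smat (k+1) ρ * (Smat (k+1) ρ * Smat (k+1) ρ)) (Fin.last k) (Fin.last k)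
    = ∑ a ∈ range (k+1), ∑ b ∈ range (k+1), (ρ^2)^(max a b) := by
  rw [Matrix.mul_apply]
  rw [fin_sum_to_range (k+1)
    (fun n : ℕ => ∑ t ∈ range (k+1),
      ρ ^ ((k - n) + (n - k)) * (ρ ^ ((n - t) + (t - n)) * ρ ^ ((t - k) + (k - t)))) _
    (fun u => by
      rw [Matrix.mul_apply, Finset.mul_sum]
      rw [fin_sum_to_range (k+1)
        (fun s : ℕ => ρ ^ ((k - (u:ℕ)) + ((u:ℕ) - k))
          * (ρ ^ (((u:ℕ) - s) + (s - (u:ℕ))) * ρ ^ ((s - k) + (k - s)))) _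
        (fun t => by simp [Smat, Fin.val_last])])]
  have h3 : ∀ u ∈ range (k+1),
      (∑ t ∈ range (k+1),
        ρ ^ ((k - u) + (u - k)) * (ρ ^ ((u - t) + (t - u)) * ρ ^ ((t - k) + (k - t))))
      = (fun a : ℕ => ∑ b ∈ range (k+1), (ρ^2) ^ (max a b)) (k - u) := by
    intro u hu
    rw [Finset.mem_range] at hu
    simp only
    rw [← Finset.sum_range_reflect (fun b : ℕ => (ρ^2) ^ (max (k - u) b)) (k+1)]
    refine Finset.sum_congr rfl fun t ht => ?_
    rw [Finset.mem_range] at ht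
    rw [← pow_add, ← pow_add, ← pow_mul]
    congr 1
    have e : k + 1 - 1 - t = k - t := by omega
    rw [e]
    rcases Nat.le_total u t with h | h
    · have : max (k - u) (k - t) = k - u := by omega
      rw [this]; omega
    · have : max (k - u) (k - t) = k - t := by omega
      rw [this]; omega
  rw [Finset.sum_congr rfl h3,
    ← Finset.sum_range_reflect (fun a : ℕ => ∑ b ∈ range (k+1), (ρ^2) ^ (max a b)) (k+1)]
  simp only [Nat.add_sub_cancel]

end entries

lemma TS_eq_one (k : ℕ) (hk : 1 ≤ k) (ρ : ℝ) (hρ : (1:ℝ) - ρ^2 ≠ 0)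
    (T' : Matrix (Fin (k+1)) (Fin (k+1)) ℝ)
    (hT : ∀ i j : Fin (k+1), T' i j =
      if i = j then (if (i : ℕ) = 0 ∨ (i : ℕ) = k then 1 / (1 - ρ ^ 2)
        else (1 + ρ ^ 2) / (1 - ρ ^ 2))
      else if (i : ℕ) + 1 = (j : ℕ) ∨ (j : ℕ) + 1 = (i : ℕ) then -ρ / (1 - ρ ^ 2) else 0) :
    T' * Smat (k+1) ρ = 1 := by
  ext i j
  rw [Matrix.mul_apply, Matrix.one_apply]
  set a := (i : ℕ) with haa
  set b := (j : ℕ) with hbb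
  have hak : a < k + 1 := i.isLt
  have hbk : b < k + 1 := j.isLt
  have hij : (i = j) = (a = b) := by simp [Fin.ext_iff]; exact Iff.rfl
  have hiff : (if i = j then (1:ℝ) else 0) = if a = b then 1 else 0 := by
    simp only [hij]
  set F : ℕ → ℝ := fun t =>
    (if a = t then (if a = 0 ∨ a = k then 1 / (1 - ρ ^ 2)
        else (1 + ρ ^ 2) / (1 - ρ ^ 2))
      else if a + 1 = t ∨ t + 1 = a then -ρ / (1 - ρ ^ 2) else 0)
    * ρ ^ ((t - b) + (b - t)) with hF
  have step1 : ∑ t : Fin (k+1), T' i t * Smat (k+1) ρ t j = ∑ t ∈ range (k+1), F t := by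
    rw [← Fin.sum_univ_eq_sum_range F (k+1)]
    refine Finset.sum_congr rfl fun t _ => ?_
    rw [hT i t]
    simp only [hF, Smat, Matrix.of_apply, Fin.ext_iff, ← haa, ← hbb]
  rw [step1, hiff]
  rcases Nat.eq_zero_or_pos a with ha0 | hapos
  · -- a = 0 : support {0, 1}
    have hptw : ∀ t ∈ range (k+1), F t =
        (if t = 0 then (1 / (1 - ρ ^ 2)) * ρ ^ b else 0)
        + (if t = 1 then (-ρ / (1 - ρ ^ 2)) * ρ ^ ((1 - b) + (b - 1)) else 0) := by
      intro t ht
      rw [Finset.mem_range] at ht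
      simp only [hF]
      by_cases ht0 : t = 0
      · subst ht0
        rw [if_pos (by omega : a = 0), if_pos (Or.inl (by omega : a = 0)),
          if_pos rfl, if_neg (by omega : ¬ (0:ℕ) = 1)]
        rw [Nat.zero_sub, Nat.sub_zero, Nat.zero_add]
        ring
      · by_cases ht1 : t = 1
        · subst ht1
          rw [if_neg (by omega : ¬ a = 1), if_pos (by omega : a + 1 = 1 ∨ 1 + 1 = a),
            if_neg (by omega : ¬ (1:ℕ) = 0), if_pos rfl]
          ring
        · rw [if_neg (by omega : ¬ a = t), if_neg (by omega : ¬ (a + 1 = t ∨ t + 1 = a)),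
            if_neg ht0, if_neg ht1]
          ring
    rw [Finset.sum_congr rfl hptw, Finset.sum_add_distrib,
      Finset.sum_ite_eq' (range (k+1)) 0, Finset.sum_ite_eq' (range (k+1)) 1,
      if_pos (Finset.mem_range.mpr (by omega)), if_pos (Finset.mem_range.mpr (by omega))]
    rcases Nat.eq_zero_or_pos b with hb0 | hbpos
    · rw [if_pos (by omega), hb0]
      norm_num
      field_simp
      ring
    · rw [if_neg (by omega)]
      have e1 : (1 - b) + (b - 1) = b - 1 := by omega
      have e2 : ρ ^ b = ρ ^ (b - 1) * ρ := by
        rw [← pow_succ]; congr 1; omega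
      rw [e1, e2]
      ring
  · rcases Nat.eq_or_lt_of_le (by omega : a + 1 ≤ k + 1) with hak' | hak'
    · -- a = k : support {k-1, k}
      have hA : a = k := by omega
      have hptw : ∀ t ∈ range (k+1), F t =
          (if t = k then (1 / (1 - ρ ^ 2)) * ρ ^ ((k - b) + (b - k)) else 0)
          + (if t = k - 1 then (-ρ / (1 - ρ ^ 2)) * ρ ^ ((k - 1 - b) + (b - (k - 1))) else 0) := by
        intro t ht
        rw [Finset.mem_range] at ht
        simp only [hF]
        by_cases ht0 : t = k
        · rw [ht0, if_pos (by omega : a = k), if_pos (Or.inr (by omega : a = k)),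
            if_pos rfl, if_neg (by omega : ¬ k = k - 1)]
          ring
        · by_cases ht1 : t = k - 1
          · rw [if_neg (by omega : ¬ a = t), if_pos (by omega : a + 1 = t ∨ t + 1 = a),
              if_neg ht0, if_pos ht1, ht1]
            ring
          · rw [if_neg (by omega : ¬ a = t), if_neg (by omega : ¬ (a + 1 = t ∨ t + 1 = a)),
              if_neg ht0, if_neg ht1]
            ring
      rw [Finset.sum_congr rfl hptw, Finset.sum_add_distrib,
        Finset.sum_ite_eq' (range (k+1)) k, Finset.sum_ite_eq' (range (k+1)) (k-1),
        if_pos (Finset.mem_range.mpr (by omega)), if_pos (Finset.mem_range.mpr (by omega))]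
      rcases Nat.eq_or_lt_of_le (by omega : b ≤ k) with hbk' | hbk'
      · rw [if_pos (by omega)]
        have e1 : (k - b) + (b - k) = 0 := by omega
        have e2 : (k - 1 - b) + (b - (k - 1)) = 1 := by omega
        rw [e1, e2]
        field_simp
        ring
      · rw [if_neg (by omega)]
        have e1 : (k - b) + (b - k) = k - b := by omega
        have e2 : (k - 1 - b) + (b - (k - 1)) = k - 1 - b := by omega
        have e3 : ρ ^ (k - b) = ρ ^ (k - 1 - b) * ρ := by
          rw [← pow_succ]; congr 1; omega
        rw [e1, e2, e3]
        ring
    · -- interior : support {a-1, a, a+1}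
      have hptw : ∀ t ∈ range (k+1), F t =
          (if t = a then ((1 + ρ ^ 2) / (1 - ρ ^ 2)) * ρ ^ ((a - b) + (b - a)) else 0)
          + (if t = a + 1 then (-ρ / (1 - ρ ^ 2)) * ρ ^ ((a + 1 - b) + (b - (a + 1))) else 0)
          + (if t = a - 1 then (-ρ / (1 - ρ ^ 2)) * ρ ^ ((a - 1 - b) + (b - (a - 1))) else 0) := by
        intro t ht
        rw [Finset.mem_range] at ht
        simp only [hF]
        by_cases ht0 : t = a
        · rw [ht0, if_pos rfl, if_neg (by omega : ¬ (a = 0 ∨ a = k)),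
            if_pos rfl, if_neg (by omega : ¬ a = a + 1), if_neg (by omega : ¬ a = a - 1)]
          ring
        · by_cases ht1 : t = a + 1
          · rw [ht1, if_neg (by omega : ¬ a = a + 1), if_pos (Or.inl rfl),
              if_neg (by omega : ¬ a + 1 = a), if_pos rfl, if_neg (by omega : ¬ a + 1 = a - 1)]
            ring
          · by_cases ht2 : t = a - 1
            · rw [if_neg (by omega : ¬ a = t), if_pos (by omega : a + 1 = t ∨ t + 1 = a),
                if_neg ht0, if_neg ht1, if_pos ht2, ht2]
              ring
            · rw [if_neg (by omega : ¬ a = t), if_neg (by omega : ¬ (a + 1 = t ∨ t + 1 = a)),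
                if_neg ht0, if_neg ht1, if_neg ht2]
              ring
      rw [Finset.sum_congr rfl hptw, Finset.sum_add_distrib, Finset.sum_add_distrib,
        Finset.sum_ite_eq' (range (k+1)) a, Finset.sum_ite_eq' (range (k+1)) (a+1),
        Finset.sum_ite_eq' (range (k+1)) (a-1),
        if_pos (Finset.mem_range.mpr (by omega)), if_pos (Finset.mem_range.mpr (by omega)),
        if_pos (Finset.mem_range.mpr (by omega))]
      rcases Nat.lt_trichotomy b a with hba | hba | hba
      · rw [if_neg (by omega)]
        have e1 : (a - b) + (b - a) = (a - 1 - b) + 1 := by omega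
        have e2 : (a + 1 - b) + (b - (a + 1)) = ((a - 1 - b) + 1) + 1 := by omega
        have e3 : (a - 1 - b) + (b - (a - 1)) = a - 1 - b := by omega
        rw [e1, e2, e3, pow_succ, pow_succ]
        ring
      · rw [if_pos (by omega)]
        have e1 : (a - b) + (b - a) = 0 := by omega
        have e2 : (a + 1 - b) + (b - (a + 1)) = 1 := by omega
        have e3 : (a - 1 - b) + (b - (a - 1)) = 1 := by omega
        rw [e1, e2, e3]
        field_simp
        ring
      · rw [if_neg (by omega)]
        have e1 : (a - b) + (b - a) = (b - (a + 1)) + 1 := by omega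
        have e2 : (a + 1 - b) + (b - (a + 1)) = b - (a + 1) := by omega
        have e3 : (a - 1 - b) + (b - (a - 1)) = ((b - (a + 1)) + 1) + 1 := by omega
        rw [e1, e2, e3, pow_succ, pow_succ]
        ring


section main

attribute [local instance] Matrix.linftyOpNormedAddCommGroup Matrix.linftyOpNormedSpace
  Matrix.linftyOpNormedRing Matrix.linftyOpNormedAlgebra

lemma abs_entry_le_norm {n : ℕ} (M : Matrix (Fin n) (Fin n) ℝ) (i j : Fin n) :
    |M i j| ≤ ‖M‖ := by
  have h1 : ‖M i j‖₊ ≤ ∑ j' : Fin n, ‖M i j'‖₊ :=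
    Finset.single_le_sum (f := fun j' => ‖M i j'‖₊) (fun _ _ => zero_le) (Finset.mem_univ j)
  have h2 : (∑ j' : Fin n, ‖M i j'‖₊) ≤ ‖M‖₊ := by
    rw [Matrix.linfty_opNNNorm_def]
    exact Finset.le_sup (f := fun i' => ∑ j' : Fin n, ‖M i' j'‖₊) (Finset.mem_univ i)
  calc |M i j| = ((‖M i j‖₊ : ℝ)) := by rw [coe_nnnorm, Real.norm_eq_abs]
  _ ≤ (‖M‖₊ : ℝ) := NNReal.coe_le_coe.mpr (h1.trans h2)
  _ = ‖M‖ := coe_nnnorm _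

/-- Low-SNR (γ → 0⁺) second-order expansion of the determinant ratio
det(A_{mm})/(γ det A), where A = (1/γ)T' + I and T' is the tridiagonal
inverse-correlation matrix of an AR(1) process with parameter ρ. -/
theorem uniform_sampling_low_snr_expansion (m : ℕ) (hm : 2 ≤ m) (ρ : ℝ)
    (hρ0 : 0 < ρ) (hρ1 : ρ < 1)
    (T' : Matrix (Fin m) (Fin m) ℝ)
    (hT : ∀ i j : Fin m, T' i j =
      if i = j then (if (i : ℕ) = 0 ∨ (i : ℕ) = m - 1 then 1 / (1 - ρ ^ 2)
        else (1 + ρ ^ 2) / (1 - ρ ^ 2))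
      else if (i : ℕ) + 1 = (j : ℕ) ∨ (j : ℕ) + 1 = (i : ℕ) then -ρ / (1 - ρ ^ 2) else 0) :
    ∃ C γ₀ : ℝ, 0 < γ₀ ∧ ∀ γ : ℝ, 0 < γ → γ < γ₀ →
      |(((γ⁻¹ • T' + 1).submatrix
            (fun i : Fin (m - 1) => Fin.castLE (Nat.sub_le m 1) i)
            (fun i : Fin (m - 1) => Fin.castLE (Nat.sub_le m 1) i)).det
          / (γ * (γ⁻¹ • T' + 1).det))
        - (1 - ((1 - ρ ^ (2 * m)) / (1 - ρ ^ 2)) * γ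
          + ((1 - ρ ^ (2 * m)) * (1 + ρ ^ 2) / (1 - ρ ^ 2) ^ 2
            - 2 * m * ρ ^ (2 * m) / (1 - ρ ^ 2)) * γ ^ 2)| ≤ C * γ ^ 3 := by
  obtain ⟨k, rfl⟩ : ∃ k, m = k + 1 := ⟨m - 1, by omega⟩
  have hk : 1 ≤ k := by omega
  have hρ2 : ρ ^ 2 < 1 := by nlinarith
  have hd : (1:ℝ) - ρ ^ 2 ≠ 0 := by nlinarith
  have hx1 : ρ ^ 2 ≠ 1 := by nlinarith
  set S := Smat (k+1) ρ with hSdef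
  have hT' : ∀ i j : Fin (k+1), T' i j =
      if i = j then (if (i : ℕ) = 0 ∨ (i : ℕ) = k then 1 / (1 - ρ ^ 2)
        else (1 + ρ ^ 2) / (1 - ρ ^ 2))
      else if (i : ℕ) + 1 = (j : ℕ) ∨ (j : ℕ) + 1 = (i : ℕ)
        then -ρ / (1 - ρ ^ 2) else 0 := by
    intro i j
    rw [hT i j]
    simp only [Nat.add_sub_cancel]
  have hTS : T' * S = 1 := TS_eq_one k hk ρ hd T' hT'
  have hS1 : S (Fin.last k) (Fin.last k) = 1 := Smat_last_last k ρ
  have hS2 : (S * S) (Fin.last k) (Fin.last k) = (1 - ρ ^ (2*(k+1))) / (1 - ρ ^ 2) := by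
    rw [hSdef, Smat_sq_last k ρ, geom_sum_eq hx1 (k+1), pow_mul]
    rw [div_eq_div_iff (by nlinarith) hd]
    ring
  have hS3 : (S * (S * S)) (Fin.last k) (Fin.last k)
      = (1 - ρ ^ (2*(k+1))) * (1 + ρ ^ 2) / (1 - ρ ^ 2) ^ 2
        - 2 * ((k:ℝ)+1) * ρ ^ (2*(k+1)) / (1 - ρ ^ 2) := by
    rw [hSdef, Smat_cube_last k ρ, aux_sum_max (ρ^2) (k+1)]
    have hmul := aux_mul (ρ^2) (k+1)
    have hd2 : ((1:ℝ) - ρ ^ 2) ^ 2 ≠ 0 := pow_ne_zero 2 hd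
    have : ∑ t ∈ Finset.range (k+1), (2*(t:ℝ)+1)*(ρ^2)^t
        = (1 + ρ^2 - (2*((k:ℝ)+1)+1)*(ρ^2)^(k+1) + (2*((k:ℝ)+1)-1)*(ρ^2)^(k+2)) / (1 - ρ^2)^2 := by
      rw [eq_div_iff hd2, mul_comm, hmul]
      push_cast
      ring
    rw [this, pow_mul]
    rw [div_sub_div _ _ hd2 hd, div_eq_div_iff (by positivity) (by
      exact mul_ne_zero hd2 hd)]
    push_cast
    ring
  -- completeness for the geometric-series unit
  haveI : CompleteSpace (Matrix (Fin (k+1)) (Fin (k+1)) ℝ) := FiniteDimensional.complete ℝ _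
  refine ⟨2 * (‖S‖+1)^4, min 1 (1/(2*(‖S‖+1))), lt_min one_pos (by positivity), ?_⟩
  intro γ hγ0 hγmin
  obtain ⟨hγ1, hγ2⟩ := lt_min_iff.mp hγmin
  have hγne : γ ≠ 0 := hγ0.ne'
  have hSnn : (0:ℝ) ≤ ‖S‖ := norm_nonneg S
  have hγS : γ * ‖S‖ ≤ 1/2 := by
    have h1 : γ * (2*(‖S‖+1)) < 1 := by
      rw [← lt_div_iff₀ (by positivity : (0:ℝ) < 2*(‖S‖+1))]
      exact hγ2
    nlinarith [mul_nonneg hγ0.le hSnn]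
  have hlt : ‖-(γ • S)‖ < 1 := by
    rw [norm_neg, norm_smul, Real.norm_eq_abs, abs_of_pos hγ0]
    linarith
  set u : (Matrix (Fin (k+1)) (Fin (k+1)) ℝ)ˣ := Units.oneSub (-(γ • S)) hlt with hu_def
  have hu : (u : Matrix (Fin (k+1)) (Fin (k+1)) ℝ) = 1 + γ • S := by
    rw [hu_def, Units.val_oneSub, sub_neg_eq_add]
  set W := ((u⁻¹ : _ˣ) : Matrix (Fin (k+1)) (Fin (k+1)) ℝ) with hWdef
  have hW1 : (1 + γ • S) * W = 1 := by rw [← hu]; exact u.mul_inv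
  have hWid : W = 1 - γ • (S * W) := by
    have h := hW1
    rw [add_mul, one_mul, smul_mul_assoc] at h
    exact eq_sub_of_add_eq h
  have hWnorm : ‖W‖ ≤ 2 := by
    have h1 : ‖W‖ ≤ ‖(1 : Matrix (Fin (k+1)) (Fin (k+1)) ℝ)‖ + ‖γ • (S * W)‖ := by
      conv_lhs => rw [hWid]
      exact norm_sub_le _ _
    have h2 : ‖γ • (S * W)‖ = γ * ‖S * W‖ := by
      rw [norm_smul, Real.norm_eq_abs, abs_of_pos hγ0]
    have h3 : ‖S * W‖ ≤ ‖S‖ * ‖W‖ := norm_mul_le _ _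
    have h4 : ‖(1 : Matrix (Fin (k+1)) (Fin (k+1)) ℝ)‖ = 1 := norm_one
    have h5 : (0:ℝ) ≤ ‖W‖ := norm_nonneg W
    nlinarith
  set V := W * S with hVdef
  have hVid : V = S - γ • (S * V) := by
    calc V = (1 - γ • (S * W)) * S := by rw [← hWid]
    _ = S - γ • (S * (W * S)) := by
        rw [sub_mul, one_mul, smul_mul_assoc, mul_assoc]
    _ = S - γ • (S * V) := by rw [← hVdef]
  have e1 : S * V = S * S - γ • (S * (S * V)) := by
    conv_lhs => rw [hVid]
    rw [mul_sub, mul_smul_comm]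
  have e2 : S * (S * V) = S * (S * S) - γ • (S * (S * (S * V))) := by
    conv_lhs => rw [e1]
    rw [mul_sub, mul_smul_comm]
  have hVexp : V = S - γ • (S * S) + γ^2 • (S * (S * S)) - γ^3 • (S * (S * (S * V))) := by
    conv_lhs => rw [hVid]
    conv_lhs => rw [e1]
    conv_lhs => rw [e2]
    module
  have hVll : V (Fin.last k) (Fin.last k)
      = 1 - γ * ((1 - ρ ^ (2*(k+1))) / (1 - ρ ^ 2))
        + γ^2 * ((1 - ρ ^ (2*(k+1))) * (1 + ρ ^ 2) / (1 - ρ ^ 2) ^ 2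
            - 2 * ((k:ℝ)+1) * ρ ^ (2*(k+1)) / (1 - ρ ^ 2))
        - γ^3 * (S * (S * (S * V))) (Fin.last k) (Fin.last k) := by
    conv_lhs => rw [hVexp]
    simp only [Matrix.sub_apply, Matrix.add_apply, Matrix.smul_apply, smul_eq_mul]
    rw [hS1, hS2, hS3]
  have hVnorm : ‖V‖ ≤ 2 * ‖S‖ := by
    calc ‖V‖ ≤ ‖W‖ * ‖S‖ := norm_mul_le _ _
    _ ≤ 2 * ‖S‖ := mul_le_mul_of_nonneg_right hWnorm hSnn
  have hR : |(S * (S * (S * V))) (Fin.last k) (Fin.last k)| ≤ 2 * (‖S‖+1)^4 := by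
    have b1 : |(S * (S * (S * V))) (Fin.last k) (Fin.last k)| ≤ ‖S * (S * (S * V))‖ :=
      abs_entry_le_norm _ _ _
    have b2 : ‖S * (S * (S * V))‖ ≤ ‖S‖ * (‖S‖ * (‖S‖ * ‖V‖)) := by
      calc ‖S * (S * (S * V))‖ ≤ ‖S‖ * ‖S * (S * V)‖ := norm_mul_le _ _
      _ ≤ ‖S‖ * (‖S‖ * ‖S * V‖) :=
          mul_le_mul_of_nonneg_left (norm_mul_le _ _) hSnn
      _ ≤ ‖S‖ * (‖S‖ * (‖S‖ * ‖V‖)) :=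
          mul_le_mul_of_nonneg_left
            (mul_le_mul_of_nonneg_left (norm_mul_le _ _) hSnn) hSnn
    have b3 : ‖S‖ * (‖S‖ * (‖S‖ * ‖V‖)) ≤ ‖S‖ * (‖S‖ * (‖S‖ * (2 * ‖S‖))) :=
      mul_le_mul_of_nonneg_left
        (mul_le_mul_of_nonneg_left
          (mul_le_mul_of_nonneg_left hVnorm hSnn) hSnn) hSnn
    have b3' : ‖S‖ * (‖S‖ * (‖S‖ * (2 * ‖S‖))) = 2 * ‖S‖^4 := by ring
    have b4 : ‖S‖^4 ≤ (‖S‖+1)^4 := by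
      apply pow_le_pow_left₀ hSnn
      linarith
    linarith
  -- determinant manipulations
  set B := γ⁻¹ • T' + 1 with hB
  have hfact : T' + γ • (1 : Matrix (Fin (k+1)) (Fin (k+1)) ℝ) = T' * (1 + γ • S) := by
    rw [mul_add, mul_one, mul_smul_comm, hTS]
  have hBfact : B = γ⁻¹ • (T' + γ • (1 : Matrix (Fin (k+1)) (Fin (k+1)) ℝ)) := by
    rw [hB, smul_add, smul_smul, inv_mul_cancel₀ hγne, one_smul]
  have hBV : B * (γ • V) = 1 := by
    rw [hBfact, smul_mul_assoc, mul_smul_comm, smul_smul, inv_mul_cancel₀ hγne, one_smul,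
      hfact, hVdef, mul_assoc, ← mul_assoc (1 + γ • S) W S, hW1, one_mul, hTS]
  have hVB : (γ • V) * B = 1 := mul_eq_one_comm.mp hBV
  have hBdetU : IsUnit B.det :=
    (Matrix.isUnit_iff_isUnit_det B).mp ⟨⟨B, γ • V, hBV, hVB⟩, rfl⟩
  have hBdet : B.det ≠ 0 := hBdetU.ne_zero
  have hBinv : B⁻¹ = γ • V := Matrix.inv_eq_right_inv hBV
  have hadj : (B.submatrix (Fin.castSucc : Fin k → Fin (k+1))
        (Fin.castSucc : Fin k → Fin (k+1))).det
      = B.det * (γ * V (Fin.last k) (Fin.last k)) := by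
    have h := Matrix.adjugate_fin_succ_eq_det_submatrix B (Fin.last k) (Fin.last k)
    rw [Fin.succAbove_last] at h
    have hsign : ((-1:ℝ))^(((Fin.last k : Fin (k+1)):ℕ) + ((Fin.last k : Fin (k+1)):ℕ)) = 1 := by
      rw [Fin.val_last]
      exact Even.neg_one_pow ⟨k, rfl⟩
    rw [hsign, one_mul] at h
    have h2 : B.det • (γ • V) = B.adjugate := by
      rw [← hBinv, Matrix.inv_def, smul_smul, Ring.inverse_eq_inv (B.det),
        mul_inv_cancel₀ hBdet, one_smul]
    rw [← h, ← h2, Matrix.smul_apply, Matrix.smul_apply, smul_eq_mul, smul_eq_mul]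
  have hadj' : (B.submatrix
        (fun i : Fin (k+1-1) => Fin.castLE (Nat.sub_le (k+1) 1) i)
        (fun i : Fin (k+1-1) => Fin.castLE (Nat.sub_le (k+1) 1) i)).det
      = B.det * (γ * V (Fin.last k) (Fin.last k)) := hadj
  rw [hadj']
  have hq : B.det * (γ * V (Fin.last k) (Fin.last k)) / (γ * B.det)
      = V (Fin.last k) (Fin.last k) := by
    field_simp
  rw [hq, hVll]
  have hgoal : 1 - γ * ((1 - ρ ^ (2*(k+1))) / (1 - ρ ^ 2))
        + γ^2 * ((1 - ρ ^ (2*(k+1))) * (1 + ρ ^ 2) / (1 - ρ ^ 2) ^ 2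
            - 2 * ((k:ℝ)+1) * ρ ^ (2*(k+1)) / (1 - ρ ^ 2))
        - γ^3 * (S * (S * (S * V))) (Fin.last k) (Fin.last k)
      - (1 - ((1 - ρ ^ (2 * (k+1))) / (1 - ρ ^ 2)) * γ
          + ((1 - ρ ^ (2 * (k+1))) * (1 + ρ ^ 2) / (1 - ρ ^ 2) ^ 2
            - 2 * ((k+1:ℕ):ℝ) * ρ ^ (2 * (k+1)) / (1 - ρ ^ 2)) * γ ^ 2)
      = -(γ^3 * (S * (S * (S * V))) (Fin.last k) (Fin.last k)) := by
    push_cast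
    ring
  rw [hgoal, abs_neg, abs_mul, abs_pow, abs_of_pos hγ0]
  calc γ ^ 3 * |(S * (S * (S * V))) (Fin.last k) (Fin.last k)|
      ≤ γ ^ 3 * (2 * (‖S‖+1)^4) := by
        apply mul_le_mul_of_nonneg_left hR (by positivity)
  _ = 2 * (‖S‖+1)^4 * γ ^ 3 := by ring

end main
end

section
/- The tridiagonal matrix Σ' with diagonal entries a_1 = R_2, a_m = R_m, a_i = R_i + R_{i+1} − 1 (1 < i < m) and off-diagonal entries b_i = −√(R_{i+1}(R_{i+1}−1)), where R_i = 1/(1 − e^{−2κT_i}) with T_i > 0, is positive definite. -/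
open Real Matrix

/-- The tridiagonal inverse-correlation matrix Σ' of an irregularly sampled OU process,
with R_i = 1/(1 − e^{−2κT_i}) for sampling intervals T_i > 0, is symmetric positive
definite. -/
theorem irregular_ou_inverse_correlation_posDef (m : ℕ) (hm : 2 ≤ m) (κ : ℝ) (hκ : 0 < κ)
    (T : ℕ → ℝ) (hT : ∀ i, 2 ≤ i → i ≤ m → 0 < T i)
    (R : ℕ → ℝ)
    (hR : ∀ i, 2 ≤ i → i ≤ m → R i = 1 / (1 - Real.exp (-2 * κ * T i)))
    (S' : Matrix (Fin m) (Fin m) ℝ)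
    (hS' : ∀ i j : Fin m, S' i j =
      if i = j then
        (if (i : ℕ) = 0 then R 2
         else if (i : ℕ) = m - 1 then R m
         else R ((i : ℕ) + 1) + R ((i : ℕ) + 2) - 1)
      else if (i : ℕ) + 1 = (j : ℕ) then -Real.sqrt (R ((i : ℕ) + 2) * (R ((i : ℕ) + 2) - 1))
      else if (j : ℕ) + 1 = (i : ℕ) then -Real.sqrt (R ((j : ℕ) + 2) * (R ((j : ℕ) + 2) - 1))
      else 0) :
    S'.PosDef := by
  classical
  have hRgt : ∀ i, 2 ≤ i → i ≤ m → 1 < R i := by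
    intro i h2 him
    rw [hR i h2 him]
    have hTi := hT i h2 him
    have he1 : Real.exp (-2 * κ * T i) < 1 := by
      rw [Real.exp_lt_one_iff]
      nlinarith
    have he0 : (0:ℝ) < Real.exp (-2 * κ * T i) := Real.exp_pos _
    exact one_lt_one_div (by linarith) (by linarith)
  -- the Cholesky-type (upper bidiagonal) factor
  set d : Fin m → ℝ := fun k => if (k : ℕ) = m - 1 then 1 else Real.sqrt (R ((k:ℕ) + 2)) with hd
  set e : Fin m → ℝ := fun k => -Real.sqrt (R ((k:ℕ) + 2) - 1) with he
  set B : Matrix (Fin m) (Fin m) ℝ :=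
    Matrix.of fun k i => if k = i then d k else if (k:ℕ) + 1 = (i:ℕ) then e k else 0 with hB
  have hd_pos : ∀ k : Fin m, 0 < d k := by
    intro k
    simp only [hd]
    split
    · exact one_pos
    · have hk := k.isLt
      have : 1 < R ((k:ℕ)+2) := hRgt _ (by omega) (by omega)
      exact Real.sqrt_pos.mpr (by linarith)
  have hdm : ∀ k : Fin m, (k:ℕ) ≠ m - 1 → d k = Real.sqrt (R ((k:ℕ) + 2)) := by
    intro k hk; simp only [hd]; rw [if_neg hk]
  have hB0 : ∀ k i : Fin m, k ≠ i → (k:ℕ)+1 ≠ (i:ℕ) → B k i = 0 := by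
    intro k i h1 h2
    simp [hB, h1, h2]
  have hBdiag : ∀ k : Fin m, B k k = d k := by intro k; simp [hB]
  have hBsub : ∀ k i : Fin m, (k:ℕ)+1 = (i:ℕ) → B k i = e k := by
    intro k i h
    have hne : k ≠ i := by
      intro hh; rw [hh] at h; omega
    simp [hB, hne, h]
  have sum_two : ∀ (f : Fin m → ℝ) (t₁ t₂ : Fin m), t₁ ≠ t₂ →
      (∀ k, k ≠ t₁ → k ≠ t₂ → f k = 0) → ∑ k, f k = f t₁ + f t₂ := by
    intro f t₁ t₂ hne h0
    rw [← Finset.sum_pair hne]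
    refine (Finset.sum_subset (Finset.subset_univ _) ?_).symm
    intro x _ hx
    simp only [Finset.mem_insert, Finset.mem_singleton, not_or] at hx
    exact h0 x hx.1 hx.2
  -- the factorization
  have hfac : S' = Bᴴ * B := by
    ext i j
    rw [hS' i j, Matrix.mul_apply]
    simp only [conjTranspose_apply, star_trivial]
    by_cases hij : i = j
    · subst hij
      rw [if_pos rfl]
      by_cases h0 : (i:ℕ) = 0
      · have hsum : ∑ k, B k i * B k i = B i i * B i i := by
          apply Finset.sum_eq_single
          · intro k _ hk
            rw [hB0 k i hk (by omega), zero_mul]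
          · intro h; exact absurd (Finset.mem_univ i) h
        rw [hsum, hBdiag, hdm i (by omega), h0]
        norm_num
        exact (Real.mul_self_sqrt (le_of_lt (lt_trans one_pos (hRgt 2 le_rfl hm)))).symm
      · have hip : (i:ℕ) - 1 < m := by have := i.isLt; omega
        set p : Fin m := ⟨(i:ℕ) - 1, hip⟩ with hp
        have hpv : (p:ℕ) = (i:ℕ) - 1 := rfl
        have hpi : (p:ℕ) + 1 = (i:ℕ) := by omega
        have hpne : p ≠ i := by
          intro hh
          rw [hh] at hpv
          omega
        have hsum : ∑ k, B k i * B k i = B p i * B p i + B i i * B i i := by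
          apply sum_two _ p i hpne
          intro k hk1 hk2
          have : B k i = 0 := by
            refine hB0 k i hk2 ?_
            intro hc
            exact hk1 (by apply Fin.ext; omega)
          rw [this, zero_mul]
        have hR1 : 1 < R ((i:ℕ) + 1) := by
          have := i.isLt
          exact hRgt _ (by omega) (by omega)
        have hsq : B p i * B p i = R ((i:ℕ) + 1) - 1 := by
          rw [hBsub p i hpi]
          have h2 : (p:ℕ) + 2 = (i:ℕ) + 1 := by omega
          simp only [he]
          rw [h2, neg_mul_neg, Real.mul_self_sqrt (by linarith)]
        rw [hsum, hsq, hBdiag]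
        by_cases him : (i:ℕ) = m - 1
        · rw [if_neg h0, if_pos him]
          have hd1 : d i = 1 := by simp only [hd]; rw [if_pos him]
          have h1 : (i:ℕ) + 1 = m := by omega
          rw [hd1, h1]
          ring
        · rw [if_neg h0, if_neg him, hdm i him]
          have hR2 : 1 < R ((i:ℕ) + 2) := by
            have := i.isLt
            exact hRgt _ (by omega) (by omega)
          rw [Real.mul_self_sqrt (by linarith)]
          ring
    · rw [if_neg hij]
      by_cases hij1 : (i:ℕ) + 1 = (j:ℕ)
      · rw [if_pos hij1]
        have hsum : ∑ k, B k i * B k j = B i i * B i j := by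
          apply Finset.sum_eq_single
          · intro k _ hk
            by_cases h : (k:ℕ) + 1 = (i:ℕ)
            · have : B k j = 0 := by
                refine hB0 k j ?_ (by omega)
                intro hh; rw [hh] at h; omega
              rw [this, mul_zero]
            · rw [hB0 k i hk h, zero_mul]
          · intro h; exact absurd (Finset.mem_univ i) h
        have him : (i:ℕ) ≠ m - 1 := by have := j.isLt; omega
        rw [hsum, hBdiag, hBsub i j hij1, hdm i him]
        simp only [he]
        have hR2 : 1 < R ((i:ℕ) + 2) := by
          have := j.isLt
          exact hRgt _ (by omega) (by omega)
        rw [Real.sqrt_mul (by linarith)]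
        ring
      · rw [if_neg hij1]
        by_cases hij2 : (j:ℕ) + 1 = (i:ℕ)
        · rw [if_pos hij2]
          have hsum : ∑ k, B k i * B k j = B j i * B j j := by
            apply Finset.sum_eq_single
            · intro k _ hk
              by_cases h : (k:ℕ) + 1 = (j:ℕ)
              · have : B k i = 0 := by
                  refine hB0 k i ?_ (by omega)
                  intro hh; rw [hh] at h; omega
                rw [this, zero_mul]
              · rw [hB0 k j hk h, mul_zero]
            · intro h; exact absurd (Finset.mem_univ j) h
          have hjm : (j:ℕ) ≠ m - 1 := by have := i.isLt; omega
          rw [hsum, hBdiag, hBsub j i hij2, hdm j hjm]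
          simp only [he]
          have hR2 : 1 < R ((j:ℕ) + 2) := by
            have := i.isLt
            exact hRgt _ (by omega) (by omega)
          rw [Real.sqrt_mul (by linarith)]
          ring
        · rw [if_neg hij2]
          refine (Finset.sum_eq_zero ?_).symm
          intro k _
          by_cases hki : k = i
          · subst hki
            have : B k j = 0 := hB0 k j hij hij1
            rw [this, mul_zero]
          · by_cases h : (k:ℕ) + 1 = (i:ℕ)
            · have : B k j = 0 := by
                refine hB0 k j ?_ ?_
                · intro hh; rw [hh] at h; exact hij2 h
                · omega
              rw [this, mul_zero]
            · rw [hB0 k i hki h, zero_mul]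
  -- B is invertible
  have hBtri : B.BlockTriangular id := by
    intro k i hlt
    refine hB0 k i (fun hh => (ne_of_lt hlt) hh.symm) ?_
    have : (i:ℕ) < (k:ℕ) := hlt
    omega
  have hdet : B.det = ∏ k, d k := by
    rw [Matrix.det_of_upperTriangular hBtri]
    exact Finset.prod_congr rfl fun k _ => hBdiag k
  have hdet0 : B.det ≠ 0 := by
    rw [hdet]
    exact ne_of_gt (Finset.prod_pos fun k _ => hd_pos k)
  have hBinj : Function.Injective B.mulVec :=
    mulVec_injective_iff_isUnit.mpr ((Matrix.isUnit_iff_isUnit_det _).mpr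
      (isUnit_iff_ne_zero.mpr hdet0))
  have hBHinj : Function.Injective (Bᴴ).mulVec := by
    refine mulVec_injective_iff_isUnit.mpr ((Matrix.isUnit_iff_isUnit_det _).mpr
      (isUnit_iff_ne_zero.mpr ?_))
    rw [Matrix.det_conjTranspose]
    simpa using hdet0
  -- conclude
  have hps : (Bᴴ * B).PosSemidef := Matrix.posSemidef_conjTranspose_mul_self B
  rw [hfac]
  refine ⟨hps.1, fun x hx => lt_of_le_of_ne (hps.2 x) (Ne.symm ?_)⟩
  intro h0
  have h1 : (Bᴴ * B) *ᵥ x = 0 := (hps.dotProduct_mulVec_zero_iff x).mp (by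
    rw [← h0]; simp [dotProduct, mulVec, Finsupp.sum_fintype, Finset.mul_sum, mul_assoc])
  rw [← Matrix.mulVec_mulVec] at h1
  have h2 : B *ᵥ x = 0 := by
    apply hBHinj
    rw [h1, Matrix.mulVec_zero]
  have h3 : (x : Fin m → ℝ) = 0 := hBinj (by rw [h2, Matrix.mulVec_zero])
  exact hx (Finsupp.coe_eq_zero.mp h3)
end
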